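/- arXiv:2102.00857 — 4 statements merged into one kernel-verified Lean document; each statement's English description precedes it below -/
import Mathlib

section
/- A Banach space X has the Grothendieck property if and only if G(X) = 0, where G(X) = sup over weak* null sequences (f_n) in B_{X*} of inf over convex block subsequences (g_n) of limsup_n ‖g_n‖. -/
open Filter Topology Metric Set NormedSpace

noncomputable section

/-- `y` is a convex block subsequence of `x`. -/
def IsConvexBlock {E : Type*} [AddCommGroup E] [Module ℝ E] (x y : ℕ → E) : Prop :=
  ∃ k : ℕ → ℕ, k 0 = 0 ∧ StrictMono k ∧
    ∀ n, y n ∈ convexHull ℝ (x '' Set.Ico (k n) (k (n + 1)))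

variable (X : Type*) [NormedAddCommGroup X] [NormedSpace ℝ X]

/-- A set is weakly compact if its image in the weak topology is compact. -/
def WeaklyCompact (K : Set X) : Prop := IsCompact (toWeakSpace ℝ X '' K)

/-- A sequence is weakly null. -/
def WeaklyNull (x : ℕ → X) : Prop :=
  ∀ f : X →L[ℝ] ℝ, Tendsto (fun n => f (x n)) atTop (𝓝 0)

/-- A sequence in the dual is weak* null. -/
def WeakStarNull (f : ℕ → X →L[ℝ] ℝ) : Prop :=
  ∀ x : X, Tendsto (fun n => f n x) atTop (𝓝 0)

/-- A sequence in the dual is weak* Cauchy. -/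
def WeakStarCauchy (f : ℕ → X →L[ℝ] ℝ) : Prop :=
  ∀ x : X, ∃ L : ℝ, Tendsto (fun n => f n x) atTop (𝓝 L)

variable {X}

/-- α((f_n)) = sup over weakly compact K ⊆ B_X of limsup_n sup_{x ∈ K} |⟨f_n, x⟩|. -/
def alphaQ (f : ℕ → X →L[ℝ] ℝ) : ℝ :=
  sSup { r | ∃ K : Set X, K ⊆ closedBall 0 1 ∧ WeaklyCompact X K ∧
    r = limsup (fun n => sSup ((fun x => |f n x|) '' K)) atTop }

/-- β((f_n)) = sup over weakly null (x_n) in B_X of limsup_n |⟨f_n, x_n⟩|. -/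
def betaQ (f : ℕ → X →L[ℝ] ℝ) : ℝ :=
  sSup { r | ∃ x : ℕ → X, (∀ n, x n ∈ closedBall (0 : X) 1) ∧ WeaklyNull X x ∧
    r = limsup (fun n => |f n (x n)|) atTop }

/-- ca_{ρ*}((f_n)): measures Mackey-Cauchyness. -/
def caRho (f : ℕ → X →L[ℝ] ℝ) : ℝ :=
  sSup { r | ∃ K : Set X, K ⊆ closedBall 0 1 ∧ WeaklyCompact X K ∧
    r = ⨅ n : ℕ, sSup { t | ∃ k ≥ n, ∃ l ≥ n, ∃ x ∈ K, t = |(f k - f l) x| } }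

/-- ca((z_n)) = inf_n sup_{k,l ≥ n} ‖z_k - z_l‖. -/
def caSeq {E : Type*} [NormedAddCommGroup E] (z : ℕ → E) : ℝ :=
  ⨅ n : ℕ, sSup { r | ∃ k ≥ n, ∃ l ≥ n, r = ‖z k - z l‖ }

variable (X)

def K1 : ℝ :=
  sSup { r | ∃ f : ℕ → X →L[ℝ] ℝ, (∀ n, ‖f n‖ ≤ 1) ∧ WeakStarNull X f ∧
    r = sInf { s | ∃ g, IsConvexBlock f g ∧ s = alphaQ g } }

def K2 : ℝ :=
  sSup { r | ∃ f : ℕ → X →L[ℝ] ℝ, (∀ n, ‖f n‖ ≤ 1) ∧ WeakStarNull X f ∧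
    r = sInf { s | ∃ g, IsConvexBlock f g ∧ s = betaQ g } }

def K3 : ℝ :=
  sSup { r | ∃ f : ℕ → X →L[ℝ] ℝ, (∀ n, ‖f n‖ ≤ 1) ∧ WeakStarCauchy X f ∧
    r = sInf { s | ∃ g, IsConvexBlock f g ∧ s = caRho g } }

/-- Property (K). -/
def PropertyK : Prop :=
  ∀ f : ℕ → X →L[ℝ] ℝ, WeakStarNull X f → ∃ g, IsConvexBlock f g ∧ alphaQ g = 0

/-- The Grothendieck property: every weak* null sequence in the dual is weakly null. -/
def Grothendieck : Prop :=
  ∀ f : ℕ → X →L[ℝ] ℝ, WeakStarNull X f →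
    ∀ Φ : (X →L[ℝ] ℝ) →L[ℝ] ℝ, Tendsto (fun n => Φ (f n)) atTop (𝓝 0)

def GQ : ℝ :=
  sSup { r | ∃ f : ℕ → X →L[ℝ] ℝ, (∀ n, ‖f n‖ ≤ 1) ∧ WeakStarNull X f ∧
    r = sInf { s | ∃ g, IsConvexBlock f g ∧ s = limsup (fun n => ‖g n‖) atTop } }

def RQ : ℝ :=
  sSup { r | ∃ x : ℕ → X, (∀ n, x n ∈ closedBall (0 : X) 1) ∧
    r = sInf { s | ∃ z, IsConvexBlock x z ∧ s = caSeq z } }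

/-- weak* cluster points in the bidual of a sequence in the bidual. -/
def WStarClusterPts (u : ℕ → (X →L[ℝ] ℝ) →L[ℝ] ℝ) : Set ((X →L[ℝ] ℝ) →L[ℝ] ℝ) :=
  { z | MapClusterPt (StrongDual.toWeakDual (𝕜 := ℝ) z) atTop
      (fun n => StrongDual.toWeakDual (𝕜 := ℝ) (u n)) }

def wckQ (A : Set X) : ℝ :=
  sSup { r | ∃ x : ℕ → X, (∀ n, x n ∈ A) ∧
    r = sInf { s | ∃ z ∈ WStarClusterPts X (fun n => inclusionInDoubleDual ℝ X (x n)),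
      ∃ v : X, s = ‖z - inclusionInDoubleDual ℝ X v‖ } }

/-! ### Auxiliary lemmas -/

section Aux

variable {E : Type*} [NormedAddCommGroup E] [NormedSpace ℝ E]

lemma aux_norm_le_of_mem_convexHull {s : Set E} {c : ℝ} (hc : 0 ≤ c)
    (hs : ∀ x ∈ s, ‖x‖ ≤ c) {y : E} (hy : y ∈ convexHull ℝ s) : ‖y‖ ≤ c := by
  have h1 : convexHull ℝ s ⊆ closedBall 0 c := by
    apply convexHull_min _ (convex_closedBall 0 c)
    intro x hx
    simpa [mem_closedBall, dist_zero_right] using hs x hx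
  simpa [mem_closedBall, dist_zero_right] using h1 hy

lemma aux_le_apply_of_mem_convexHull {s : Set E} {Φ : E →L[ℝ] ℝ} {ε : ℝ}
    (hs : ∀ x ∈ s, ε ≤ Φ x) {y : E} (hy : y ∈ convexHull ℝ s) : ε ≤ Φ y := by
  have h1 : convexHull ℝ s ⊆ { x | ε ≤ Φ x } :=
    convexHull_min hs (convex_halfSpace_ge ⟨Φ.map_add, Φ.map_smul⟩ ε)
  exact h1 hy

lemma aux_block_norm_le {x g : ℕ → E} (h : IsConvexBlock x g) {c : ℝ} (hc : 0 ≤ c)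
    (hx : ∀ n, ‖x n‖ ≤ c) (n : ℕ) : ‖g n‖ ≤ c := by
  obtain ⟨k, -, -, hg⟩ := h
  refine aux_norm_le_of_mem_convexHull hc ?_ (hg n)
  rintro y ⟨m, -, rfl⟩
  exact hx m

lemma aux_isConvexBlock_self (x : ℕ → E) : IsConvexBlock x x :=
  ⟨id, rfl, strictMono_id, fun n =>
    subset_convexHull ℝ _ ⟨n, ⟨le_refl n, Nat.lt_succ_self n⟩, rfl⟩⟩

lemma aux_mazur_zero_mem {x : ℕ → E}
    (hx : ∀ Φ : E →L[ℝ] ℝ, Tendsto (fun n => Φ (x n)) atTop (𝓝 0)) (N : ℕ) :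
    (0 : E) ∈ closure (convexHull ℝ (x '' Set.Ici N)) := by
  by_contra h
  obtain ⟨Φ, u, h0, hb⟩ := geometric_hahn_banach_point_closed
    ((convex_convexHull ℝ _).closure) isClosed_closure h
  rw [map_zero] at h0
  have h2 : ∀ᶠ n in atTop, Φ (x n) < u := (hx Φ).eventually (gt_mem_nhds h0)
  obtain ⟨n, hlt, hn⟩ := (h2.and (eventually_ge_atTop N)).exists
  have hmem : x n ∈ closure (convexHull ℝ (x '' Set.Ici N)) :=
    subset_closure (subset_convexHull ℝ _ ⟨n, hn, rfl⟩)
  exact absurd (hb _ hmem) (not_lt.mpr hlt.le)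

lemma aux_mazur_step {x : ℕ → E}
    (hx : ∀ Φ : E →L[ℝ] ℝ, Tendsto (fun n => Φ (x n)) atTop (𝓝 0))
    {ε : ℝ} (hε : 0 < ε) (N : ℕ) :
    ∃ M, N < M ∧ ∃ y ∈ convexHull ℝ (x '' Set.Ico N M), ‖y‖ ≤ ε := by
  have h0 := aux_mazur_zero_mem hx N
  rw [Metric.mem_closure_iff] at h0
  obtain ⟨y, hy, hdy⟩ := h0 ε hε
  rw [convexHull_eq_union_convexHull_finite_subsets] at hy
  simp only [Set.mem_iUnion] at hy
  obtain ⟨t, ht, hyt⟩ := hy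
  have hch : ∀ e : E, e ∈ (↑t : Set E) → ∃ i, N ≤ i ∧ x i = e := by
    intro e he
    obtain ⟨i, hi, hxi⟩ := ht he
    exact ⟨i, hi, hxi⟩
  choose! m hm hxm using hch
  set M : ℕ := max (N + 1) (t.sup fun e => m e + 1) with hM
  have hsub : (↑t : Set E) ⊆ x '' Set.Ico N M := by
    intro e he
    refine ⟨m e, ⟨hm e he, ?_⟩, hxm e he⟩
    have h1 : m e + 1 ≤ t.sup fun e => m e + 1 := Finset.le_sup (f := fun e => m e + 1) he
    exact lt_of_lt_of_le (Nat.lt_succ_self _) (le_trans h1 (le_max_right _ _))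
  refine ⟨M, lt_of_lt_of_le (Nat.lt_succ_self N) (le_max_left _ _), y,
    convexHull_mono hsub hyt, ?_⟩
  rw [dist_zero_left] at hdy
  exact hdy.le

lemma aux_exists_small_block {x : ℕ → E}
    (hx : ∀ Φ : E →L[ℝ] ℝ, Tendsto (fun n => Φ (x n)) atTop (𝓝 0))
    {ε : ℝ} (hε : 0 < ε) :
    ∃ g : ℕ → E, IsConvexBlock x g ∧ ∀ n, ‖g n‖ ≤ ε := by
  have H : ∀ N, ∃ M, N < M ∧ ∃ y ∈ convexHull ℝ (x '' Set.Ico N M), ‖y‖ ≤ ε :=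
    aux_mazur_step hx hε
  choose F hF Y hY hYnorm using H
  set k : ℕ → ℕ := fun n => F^[n] 0 with hk
  have hks : ∀ n, k (n + 1) = F (k n) := fun n => Function.iterate_succ_apply' F n 0
  refine ⟨fun n => Y (k n), ⟨k, rfl, ?_, ?_⟩, fun n => hYnorm (k n)⟩
  · apply strictMono_nat_of_lt_succ
    intro n
    rw [hks n]
    exact hF (k n)
  · intro n
    rw [hks n]
    exact hY (k n)

end Aux

section Main

variable {X : Type*} [NormedAddCommGroup X] [NormedSpace ℝ X]

/-- Elements of the inner set are nonnegative and the set is well-behaved. -/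
lemma aux_T_facts (f : ℕ → X →L[ℝ] ℝ) (hb : ∀ n, ‖f n‖ ≤ 1) :
    (∀ s ∈ { s | ∃ g, IsConvexBlock f g ∧ s = limsup (fun n => ‖g n‖) atTop }, 0 ≤ s) ∧
    { s | ∃ g, IsConvexBlock f g ∧ s = limsup (fun n => ‖g n‖) atTop }.Nonempty ∧
    sInf { s | ∃ g, IsConvexBlock f g ∧ s = limsup (fun n => ‖g n‖) atTop } ≤ 1 := by
  have h0 : ∀ s ∈ { s | ∃ g, IsConvexBlock f g ∧ s = limsup (fun n => ‖g n‖) atTop }, 0 ≤ s := by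
    rintro s ⟨g, hg, rfl⟩
    exact le_limsup_of_frequently_le (Frequently.of_forall fun n => norm_nonneg _)
      (isBoundedUnder_of ⟨1, fun n => aux_block_norm_le hg zero_le_one hb n⟩)
  have hne : { s | ∃ g, IsConvexBlock f g ∧ s = limsup (fun n => ‖g n‖) atTop }.Nonempty :=
    ⟨_, f, aux_isConvexBlock_self f, rfl⟩
  refine ⟨h0, hne, ?_⟩
  have h1 : limsup (fun n => ‖f n‖) atTop ≤ 1 :=
    limsup_le_of_le (isCoboundedUnder_le_of_le atTop fun n => norm_nonneg (f n))
      (Eventually.of_forall hb)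
  exact le_trans (csInf_le ⟨0, h0⟩ ⟨f, aux_isConvexBlock_self f, rfl⟩) h1

lemma aux_GQ_bddAbove :
    BddAbove { r | ∃ f : ℕ → X →L[ℝ] ℝ, (∀ n, ‖f n‖ ≤ 1) ∧ WeakStarNull X f ∧
      r = sInf { s | ∃ g, IsConvexBlock f g ∧ s = limsup (fun n => ‖g n‖) atTop } } := by
  refine ⟨1, ?_⟩
  rintro r ⟨f, hb, -, rfl⟩
  exact (aux_T_facts f hb).2.2

lemma aux_gq_pos [CompleteSpace X]
    (f : ℕ → X →L[ℝ] ℝ) (hf : WeakStarNull X f)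
    (Ψ : (X →L[ℝ] ℝ) →L[ℝ] ℝ) {ε : ℝ} (hε : 0 < ε)
    (hfr : ∃ᶠ n in atTop, ε ≤ Ψ (f n)) : 0 < GQ X := by
  obtain ⟨φ, hφm, hφ⟩ := extraction_of_frequently_atTop hfr
  -- uniform bound via Banach–Steinhaus
  have hbdd : ∀ x : X, ∃ C, ∀ n, ‖f n x‖ ≤ C := by
    intro x
    have h1 : Tendsto (fun n => ‖f n x‖) atTop (𝓝 ‖(0 : ℝ)‖) := (hf x).norm
    obtain ⟨C, hC⟩ := h1.bddAbove_range
    exact ⟨C, fun n => hC ⟨n, rfl⟩⟩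
  obtain ⟨C, hC⟩ := banach_steinhaus hbdd
  set D : ℝ := max C 1 with hD
  have hD1 : (1 : ℝ) ≤ D := le_max_right _ _
  have hD0 : (0 : ℝ) < D := lt_of_lt_of_le one_pos hD1
  set f' : ℕ → X →L[ℝ] ℝ := fun n => D⁻¹ • f (φ n) with hf'def
  have hb' : ∀ n, ‖f' n‖ ≤ 1 := by
    intro n
    show ‖D⁻¹ • f (φ n)‖ ≤ 1
    calc ‖D⁻¹ • f (φ n)‖ ≤ ‖(D⁻¹ : ℝ)‖ * ‖f (φ n)‖ := ContinuousLinearMap.opNorm_smul_le _ _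
      _ = D⁻¹ * ‖f (φ n)‖ := by
          rw [Real.norm_eq_abs, abs_of_nonneg (inv_nonneg.mpr hD0.le)]
      _ ≤ D⁻¹ * D := by
          apply mul_le_mul_of_nonneg_left _ (inv_nonneg.mpr hD0.le)
          exact le_trans (hC (φ n)) (le_max_left _ _)
      _ = 1 := inv_mul_cancel₀ hD0.ne'
  have hf' : WeakStarNull X f' := by
    intro x
    have h1 : Tendsto (fun n => f (φ n) x) atTop (𝓝 0) := (hf x).comp hφm.tendsto_atTop
    have h2 := h1.const_mul D⁻¹
    simpa [hf'def, ContinuousLinearMap.smul_apply, smul_eq_mul] using h2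
  set δ : ℝ := D⁻¹ * ε with hδdef
  have hδ : 0 < δ := mul_pos (inv_pos.mpr hD0) hε
  have hΨf' : ∀ n, δ ≤ Ψ (f' n) := by
    intro n
    have h1 : ε ≤ Ψ (f (φ n)) := hφ n
    have h2 : Ψ (f' n) = D⁻¹ * Ψ (f (φ n)) := by
      rw [hf'def]; simp [map_smul, smul_eq_mul]
    rw [h2, hδdef]
    exact mul_le_mul_of_nonneg_left h1 (inv_nonneg.mpr hD0.le)
  have habs : ∀ u : X →L[ℝ] ℝ, Ψ u ≤ ‖Ψ‖ * ‖u‖ := by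
    intro u
    calc Ψ u ≤ ‖Ψ u‖ := by rw [Real.norm_eq_abs]; exact le_abs_self _
      _ ≤ ‖Ψ‖ * ‖u‖ := Ψ.le_opNorm u
  have hΨpos : 0 < ‖Ψ‖ := by
    have h1 : δ ≤ ‖Ψ‖ * ‖f' 0‖ := le_trans (hΨf' 0) (habs _)
    nlinarith [norm_nonneg Ψ, hb' 0]
  set c : ℝ := δ / ‖Ψ‖ with hcdef
  have hc : 0 < c := div_pos hδ hΨpos
  have hTc : ∀ s ∈ { s | ∃ g, IsConvexBlock f' g ∧ s = limsup (fun n => ‖g n‖) atTop },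
      c ≤ s := by
    rintro s ⟨g, hg, rfl⟩
    have hgn : ∀ n, c ≤ ‖g n‖ := by
      intro n
      have h1 : δ ≤ Ψ (g n) := by
        obtain ⟨k, -, -, hmem⟩ := hg
        refine aux_le_apply_of_mem_convexHull ?_ (hmem n)
        rintro y ⟨m, -, rfl⟩
        exact hΨf' m
      have h2 : δ ≤ ‖Ψ‖ * ‖g n‖ := le_trans h1 (habs _)
      rw [hcdef, div_le_iff₀ hΨpos]
      linarith [h2]
    exact le_limsup_of_frequently_le (Frequently.of_forall hgn)
      (isBoundedUnder_of ⟨1, fun n => aux_block_norm_le hg zero_le_one hb' n⟩)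
  have hTne := (aux_T_facts f' hb').2.1
  have hsinf : c ≤ sInf { s | ∃ g, IsConvexBlock f' g ∧ s = limsup (fun n => ‖g n‖) atTop } :=
    le_csInf hTne hTc
  have hmem : sInf { s | ∃ g, IsConvexBlock f' g ∧ s = limsup (fun n => ‖g n‖) atTop } ∈
      { r | ∃ f : ℕ → X →L[ℝ] ℝ, (∀ n, ‖f n‖ ≤ 1) ∧ WeakStarNull X f ∧
        r = sInf { s | ∃ g, IsConvexBlock f g ∧ s = limsup (fun n => ‖g n‖) atTop } } :=
    ⟨f', hb', hf', rfl⟩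
  have hle := le_csSup aux_GQ_bddAbove hmem
  exact lt_of_lt_of_le (lt_of_lt_of_le hc hsinf) hle

end Main

theorem stmt11 {X : Type*} [NormedAddCommGroup X] [NormedSpace ℝ X] [CompleteSpace X] :
    Grothendieck X ↔ GQ X = 0 := by
  classical
  constructor
  · intro hG
    have key : ∀ f : ℕ → X →L[ℝ] ℝ, (∀ n, ‖f n‖ ≤ 1) → WeakStarNull X f →
        sInf { s | ∃ g, IsConvexBlock f g ∧ s = limsup (fun n => ‖g n‖) atTop } = 0 := by
      intro f hb hf
      obtain ⟨hT0, hTne, -⟩ := aux_T_facts f hb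
      have hbddB : BddBelow { s | ∃ g, IsConvexBlock f g ∧ s = limsup (fun n => ‖g n‖) atTop } :=
        ⟨0, hT0⟩
      have hle : ∀ ε : ℝ, 0 < ε →
          sInf { s | ∃ g, IsConvexBlock f g ∧ s = limsup (fun n => ‖g n‖) atTop } ≤ ε := by
        intro ε hε
        obtain ⟨g, hg, hgn⟩ := aux_exists_small_block (fun Φ => hG f hf Φ) hε
        have h1 : limsup (fun n => ‖g n‖) atTop ≤ ε :=
          limsup_le_of_le (isCoboundedUnder_le_of_le atTop fun n => norm_nonneg (g n))
            (Eventually.of_forall hgn)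
        exact le_trans (csInf_le hbddB ⟨g, hg, rfl⟩) h1
      refine le_antisymm ?_ (le_csInf hTne hT0)
      by_contra h
      push_neg at h
      have h2 := hle _ (half_pos h)
      linarith
    have hset : { r | ∃ f : ℕ → X →L[ℝ] ℝ, (∀ n, ‖f n‖ ≤ 1) ∧ WeakStarNull X f ∧
        r = sInf { s | ∃ g, IsConvexBlock f g ∧ s = limsup (fun n => ‖g n‖) atTop } } = {0} := by
      ext r
      simp only [Set.mem_setOf_eq, Set.mem_singleton_iff]
      constructor
      · rintro ⟨f, hb, hf, rfl⟩
        exact key f hb hf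
      · rintro rfl
        have hb0 : ∀ n : ℕ, ‖(fun _ : ℕ => (0 : X →L[ℝ] ℝ)) n‖ ≤ 1 := by
          intro n; simp
        have hw0 : WeakStarNull X (fun _ : ℕ => (0 : X →L[ℝ] ℝ)) := by
          intro x; simpa using (tendsto_const_nhds : Tendsto (fun _ : ℕ => (0:ℝ)) atTop (𝓝 0))
        exact ⟨fun _ => 0, hb0, hw0, (key _ hb0 hw0).symm⟩
    unfold GQ
    rw [hset, csSup_singleton]
  · intro hGQ f hf Φ
    by_contra hnot
    have hfreq : ∃ ε : ℝ, 0 < ε ∧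
        ((∃ᶠ n in atTop, ε ≤ Φ (f n)) ∨ (∃ᶠ n in atTop, ε ≤ (-Φ) (f n))) := by
      rw [Metric.tendsto_atTop] at hnot
      push_neg at hnot
      obtain ⟨ε, hε, hn⟩ := hnot
      refine ⟨ε, hε, ?_⟩
      rw [← frequently_or_distrib]
      rw [frequently_atTop]
      intro N
      obtain ⟨n, hn1, hn2⟩ := hn N
      rw [Real.dist_eq, sub_zero] at hn2
      rcases le_abs.mp hn2 with h | h
      · exact ⟨n, hn1, Or.inl h⟩
      · exact ⟨n, hn1, Or.inr (by simpa using h)⟩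
    obtain ⟨ε, hε, hor⟩ := hfreq
    rcases hor with h | h
    · exact absurd hGQ (ne_of_gt (aux_gq_pos f hf Φ hε h))
    · exact absurd hGQ (ne_of_gt (aux_gq_pos f hf (-Φ) hε h))
end
end

section
/- G(ℓ₁) = 1: there exists a weak* null sequence (f_n) in the unit ball of ℓ∞ = ℓ₁* such that every convex block subsequence (g_n) of (f_n) satisfies ‖g_n‖ = 1 for all n; hence G(ℓ₁) ≥ 1, and G(ℓ₁) ≤ 1 trivially. Specifically one may take f_n = s_ω − s_n where s_ω is the constant-one sequence and s_n is the indicator of {1,…,n}. -/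
open Filter Topology Metric Set NormedSpace

noncomputable section

variable (X : Type*) [NormedAddCommGroup X] [NormedSpace ℝ X]

variable {X}

variable (X)

instance : Fact ((1 : ENNReal) ≤ 1) := ⟨le_rfl⟩


abbrev L1 := lp (fun _ : ℕ => ℝ) 1

lemma summable_norm_coe (x : L1) : Summable (fun k => ‖x k‖) := by
  have := lp.hasSum_norm (p := 1) (by norm_num) x
  simp only [ENNReal.toReal_one, Real.rpow_one] at this
  exact this.summable

lemma norm_eq_tsum (x : L1) : ‖x‖ = ∑' k, ‖x k‖ := by
  have := lp.hasSum_norm (p := 1) (by norm_num) x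
  simp only [ENNReal.toReal_one, Real.rpow_one] at this
  exact this.tsum_eq.symm

lemma summable_coe (x : L1) : Summable (fun k => x k) :=
  (summable_norm_coe x).of_norm

def tailF (n : ℕ) : L1 →L[ℝ] ℝ :=
  LinearMap.mkContinuous
    { toFun := fun x => ∑' k, x (k + n)
      map_add' := fun x y => by
        simp only [lp.coeFn_add, Pi.add_apply]
        exact Summable.tsum_add ((summable_coe x).comp_injective (add_left_injective n))
          ((summable_coe y).comp_injective (add_left_injective n))
      map_smul' := fun c x => by
        simp only [lp.coeFn_smul, Pi.smul_apply, smul_eq_mul, RingHom.id_apply]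
        exact tsum_mul_left }
    1 (fun x => by
      simp only [LinearMap.coe_mk, AddHom.coe_mk, one_mul]
      calc ‖∑' k, x (k + n)‖ ≤ ∑' k, ‖x (k + n)‖ := norm_tsum_le_tsum_norm
            ((summable_norm_coe x).comp_injective (add_left_injective n))
        _ ≤ ∑' k, ‖x k‖ := by
            have h := Summable.sum_add_tsum_nat_add (f := fun k => ‖x k‖) n (summable_norm_coe x)
            have : 0 ≤ ∑ i ∈ Finset.range n, ‖x i‖ := Finset.sum_nonneg fun _ _ => norm_nonneg _
            linarith
        _ = ‖x‖ := (norm_eq_tsum x).symm)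

lemma tailF_apply (n : ℕ) (x : L1) : tailF n x = ∑' k, x (k + n) := rfl

lemma tailF_norm_le (n : ℕ) : ‖tailF n‖ ≤ 1 :=
  LinearMap.mkContinuous_norm_le _ zero_le_one _

lemma tailF_wstar_null : ∀ x : L1, Tendsto (fun n => tailF n x) atTop (𝓝 0) := fun x => by
  simpa [tailF_apply] using tendsto_sum_nat_add (fun k => (x k : ℝ))

def e (j : ℕ) : L1 := lp.single 1 j (1 : ℝ)

lemma norm_e (j : ℕ) : ‖e j‖ = 1 := by
  have := lp.norm_single (p := 1) (E := fun _ : ℕ => ℝ) (by norm_num) j (1:ℝ)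
  simpa [e] using this

lemma tailF_e (n j : ℕ) (h : n ≤ j) : tailF n (e j) = 1 := by
  rw [tailF_apply]
  have : (fun k => (e j) (k + n)) = fun k => if k = j - n then (1:ℝ) else 0 := by
    ext k
    by_cases hk : k + n = j
    · rw [if_pos (by omega)]
      show lp.single (E := fun _ : ℕ => ℝ) 1 j (1:ℝ) (k+n) = 1
      rw [hk]
      exact lp.single_apply_self (E := fun _ : ℕ => ℝ) 1 j (1:ℝ)
    · rw [if_neg (by omega)]
      exact lp.single_apply_ne (E := fun _ : ℕ => ℝ) 1 j (1:ℝ) hk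
  rw [this]
  exact tsum_ite_eq (j - n) (fun _ => (1:ℝ))

lemma limsup_norm_nonneg {E : Type*} [NormedAddCommGroup E] (g : ℕ → E) :
    0 ≤ limsup (fun n => ‖g n‖) atTop := by
  rw [limsup_eq]
  apply Real.sInf_nonneg
  intro a ha
  obtain ⟨n, hn⟩ := (ha : ∀ᶠ n in atTop, ‖g n‖ ≤ a).exists
  exact le_trans (norm_nonneg _) hn

lemma isConvexBlock_self {E : Type*} [AddCommGroup E] [Module ℝ E] (x : ℕ → E) :
    IsConvexBlock x x := by
  refine ⟨id, rfl, strictMono_id, fun n => ?_⟩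
  have : Set.Ico (n : ℕ) (n + 1) = {n} := by ext m; simp; omega
  simp only [id, this, Set.image_singleton, convexHull_singleton, Set.mem_singleton_iff]

lemma norm_convexBlock_eq_one (g : ℕ → L1 →L[ℝ] ℝ) (hg : IsConvexBlock tailF g)
    (m : ℕ) : ‖g m‖ = 1 := by
  obtain ⟨k, hk0, hkm, hmem⟩ := hg
  have hle : ‖g m‖ ≤ 1 := by
    have h1 : tailF '' Set.Ico (k m) (k (m + 1)) ⊆ closedBall (0 : L1 →L[ℝ] ℝ) 1 := by
      rintro - ⟨n, -, rfl⟩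
      rw [mem_closedBall_zero_iff]
      exact tailF_norm_le n
    have := convexHull_min h1 (convex_closedBall (0 : L1 →L[ℝ] ℝ) 1) (hmem m)
    rwa [mem_closedBall_zero_iff] at this
  have heval : g m (e (k (m + 1))) = 1 := by
    set v := e (k (m + 1)) with hv
    have hC : Convex ℝ {h : L1 →L[ℝ] ℝ | h v = 1} := by
      intro a ha b hb s t hs ht hst
      simp only [Set.mem_setOf_eq, ContinuousLinearMap.add_apply,
        ContinuousLinearMap.coe_smul', Pi.smul_apply, smul_eq_mul] at *
      rw [ha, hb]; linarith
    have hsub : tailF '' Set.Ico (k m) (k (m + 1)) ⊆ {h : L1 →L[ℝ] ℝ | h v = 1} := by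
      rintro - ⟨n, hn, rfl⟩
      exact tailF_e n (k (m + 1)) (le_of_lt hn.2)
    exact convexHull_min hsub hC (hmem m)
  have hge : 1 ≤ ‖g m‖ := by
    have h := (g m).le_opNorm (e (k (m + 1)))
    rw [norm_e, mul_one] at h
    calc (1 : ℝ) = ‖g m (e (k (m + 1)))‖ := by rw [heval]; simp
      _ ≤ ‖g m‖ := h
  linarith

theorem stmt12 : GQ (lp (fun _ : ℕ => ℝ) 1) = 1 := by
  have hbdd : ∀ f : ℕ → L1 →L[ℝ] ℝ, BddBelow
      {s | ∃ g, IsConvexBlock f g ∧ s = limsup (fun n => ‖g n‖) atTop} := by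
    intro f
    exact ⟨0, by rintro - ⟨g, -, rfl⟩; exact limsup_norm_nonneg g⟩
  have hub : ∀ r ∈ {r | ∃ f : ℕ → L1 →L[ℝ] ℝ, (∀ n, ‖f n‖ ≤ 1) ∧ WeakStarNull L1 f ∧
      r = sInf {s | ∃ g, IsConvexBlock f g ∧ s = limsup (fun n => ‖g n‖) atTop}}, r ≤ 1 := by
    rintro r ⟨f, hf1, -, rfl⟩
    have ht0 : limsup (fun n => ‖f n‖) atTop ∈
        {s | ∃ g, IsConvexBlock f g ∧ s = limsup (fun n => ‖g n‖) atTop} :=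
      ⟨f, isConvexBlock_self f, rfl⟩
    have hle1 : limsup (fun n => ‖f n‖) atTop ≤ 1 := by
      rw [limsup_eq]
      refine csInf_le ⟨0, fun a ha => ?_⟩ (Eventually.of_forall hf1)
      obtain ⟨n, hn⟩ := (ha : ∀ᶠ n in atTop, ‖f n‖ ≤ a).exists
      exact le_trans (norm_nonneg _) hn
    exact le_trans (csInf_le (hbdd f) ht0) hle1
  have hmem : (1 : ℝ) ∈ {r | ∃ f : ℕ → L1 →L[ℝ] ℝ, (∀ n, ‖f n‖ ≤ 1) ∧ WeakStarNull L1 f ∧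
      r = sInf {s | ∃ g, IsConvexBlock f g ∧ s = limsup (fun n => ‖g n‖) atTop}} := by
    refine ⟨tailF, tailF_norm_le, tailF_wstar_null, ?_⟩
    have hset : {s | ∃ g, IsConvexBlock tailF g ∧ s = limsup (fun n => ‖g n‖) atTop} = {1} := by
      ext s
      constructor
      · rintro ⟨g, hg, rfl⟩
        have : ∀ n, ‖g n‖ = 1 := norm_convexBlock_eq_one g hg
        simp only [Set.mem_singleton_iff]
        rw [limsup_congr (Eventually.of_forall fun n => this n)]
        exact limsup_const 1
      · rintro rfl
        refine ⟨tailF, isConvexBlock_self tailF, ?_⟩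
        have : ∀ n, ‖tailF n‖ = 1 :=
          norm_convexBlock_eq_one tailF (isConvexBlock_self tailF)
        rw [limsup_congr (Eventually.of_forall fun n => this n)]
        exact (limsup_const 1).symm
    rw [hset, csInf_singleton]
  exact le_antisymm
    (Real.sSup_le hub zero_le_one)
    (le_csSup ⟨1, hub⟩ hmem)
end
end

section
/- A Banach space X is reflexive if and only if R(X) = 0, where R(X) = sup over sequences (x_n) in B_X of inf over convex block subsequences (z_n) of ca((z_n)), with ca((z_n)) = inf_n sup_{k,l ≥ n} ‖z_k − z_l‖. -/
open Filter Topology Metric Set NormedSpace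

noncomputable section

variable (X : Type*) [NormedAddCommGroup X] [NormedSpace ℝ X]

variable {X}

variable (X)

/-! ### Auxiliary lemmas -/

section Aux

lemma isConvexBlock_norm_le {Y : Type*} [NormedAddCommGroup Y] [NormedSpace ℝ Y]
    {x z : ℕ → Y} (hx : ∀ n, ‖x n‖ ≤ 1) (hz : IsConvexBlock x z) : ∀ n, ‖z n‖ ≤ 1 := by
  obtain ⟨k, _, _, hmem⟩ := hz
  intro n
  have hsub : x '' Set.Ico (k n) (k (n + 1)) ⊆ closedBall (0 : Y) 1 := by
    rintro _ ⟨m, _, rfl⟩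
    exact mem_closedBall_zero_iff.2 (hx m)
  have := convexHull_min hsub (convex_closedBall _ _) (hmem n)
  exact mem_closedBall_zero_iff.1 this

lemma caSeq_nonneg {Y : Type*} [NormedAddCommGroup Y] {z : ℕ → Y}
    (hz : ∀ n, ‖z n‖ ≤ 1) : 0 ≤ caSeq z := by
  rw [caSeq]
  apply le_ciInf
  intro n
  apply le_csSup
  · refine ⟨2, ?_⟩
    rintro r ⟨a, _, b, _, rfl⟩
    calc ‖z a - z b‖ ≤ ‖z a‖ + ‖z b‖ := norm_sub_le _ _
      _ ≤ 2 := by linarith [hz a, hz b]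
  · exact ⟨n, le_rfl, n, le_rfl, by simp⟩

lemma caSeq_le_of_bound {Y : Type*} [NormedAddCommGroup Y] {z : ℕ → Y} {ε : ℝ}
    (h : ∀ a b : ℕ, ‖z a - z b‖ ≤ ε) : caSeq z ≤ ε := by
  rw [caSeq]
  have hbdd : BddBelow (Set.range fun n => sSup { r | ∃ k ≥ n, ∃ l ≥ n, r = ‖z k - z l‖ }) := by
    refine ⟨0, ?_⟩
    rintro _ ⟨n, rfl⟩
    apply le_csSup
    · refine ⟨ε, ?_⟩
      rintro r ⟨a, _, b, _, rfl⟩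
      exact h a b
    · exact ⟨n, le_rfl, n, le_rfl, by simp⟩
  refine ciInf_le_of_le hbdd 0 ?_
  have hne : ({ r | ∃ k ≥ 0, ∃ l ≥ 0, r = ‖z k - z l‖ }).Nonempty :=
    ⟨‖z 0 - z 0‖, ⟨0, le_rfl, 0, le_rfl, rfl⟩⟩
  apply csSup_le hne
  rintro r ⟨a, _, b, _, rfl⟩
  exact h a b

lemma caSeq_ge_of_sep {Y : Type*} [NormedAddCommGroup Y] {z : ℕ → Y}
    (hz : ∀ n, ‖z n‖ ≤ 1) {c : ℝ} (h : ∀ n, c ≤ ‖z (n + 1) - z n‖) : c ≤ caSeq z := by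
  rw [caSeq]
  apply le_ciInf
  intro n
  calc c ≤ ‖z (n + 1) - z n‖ := h n
    _ ≤ sSup { r | ∃ k ≥ n, ∃ l ≥ n, r = ‖z k - z l‖ } := by
        apply le_csSup
        · refine ⟨2, ?_⟩
          rintro r ⟨a, _, b, _, rfl⟩
          calc ‖z a - z b‖ ≤ ‖z a‖ + ‖z b‖ := norm_sub_le _ _
            _ ≤ 2 := by linarith [hz a, hz b]
        · exact ⟨n + 1, Nat.le_succ n, n, le_rfl, rfl⟩

lemma eval_convexHull_const {Y : Type*} [NormedAddCommGroup Y] [NormedSpace ℝ Y]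
    (f : Y →L[ℝ] ℝ) {S : Set Y} {c : ℝ} (h : ∀ y ∈ S, f y = c) {w : Y}
    (hw : w ∈ convexHull ℝ S) : f w = c := by
  have himg := (f : Y →ₗ[ℝ] ℝ).image_convexHull S
  have h1 : f w ∈ convexHull ℝ ((f : Y →ₗ[ℝ] ℝ) '' S) := by
    rw [← himg]
    exact ⟨w, hw, rfl⟩
  have hsub : ((f : Y →ₗ[ℝ] ℝ) '' S) ⊆ {c} := by
    rintro _ ⟨y, hy, rfl⟩
    simpa using h y hy
  have h2 := convexHull_mono hsub h1
  rw [convexHull_singleton] at h2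
  simpa using h2

/-- Helly's theorem, part 1: solvability of finitely many linear constraints prescribed by a
bidual element. -/
lemma helly_aux {E : Type*} [NormedAddCommGroup E] [NormedSpace ℝ E]
    (Φ : StrongDual ℝ (StrongDual ℝ E)) {ι : Type*} [Fintype ι] (g : ι → StrongDual ℝ E) :
    ∃ x : E, ∀ k, g k x = Φ (g k) := by
  classical
  set T : E →ₗ[ℝ] (ι → ℝ) := LinearMap.pi (fun k => (g k : E →ₗ[ℝ] ℝ)) with hT
  set p : Submodule ℝ (ι → ℝ) := LinearMap.range T with hp
  set c : ι → ℝ := fun k => Φ (g k) with hc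
  by_cases hcp : c ∈ p
  · obtain ⟨x, hx⟩ := hcp
    exact ⟨x, fun k => congrFun hx k⟩
  · exfalso
    obtain ⟨a, hac, hap⟩ := p.exists_dual_map_eq_bot_of_notMem hcp inferInstance
    have hap' : ∀ y ∈ p, a y = 0 := by
      intro y hy
      have : a y ∈ p.map a := Submodule.mem_map_of_mem hy
      rwa [hap, Submodule.mem_bot] at this
    have hexp : ∀ y : ι → ℝ, a y = ∑ k, y k * a (fun j => if k = j then 1 else 0) := by
      intro y
      conv_lhs => rw [pi_eq_sum_univ y]
      rw [map_sum]
      refine Finset.sum_congr rfl fun k _ => ?_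
      rw [map_smul, smul_eq_mul]
    set h : StrongDual ℝ E := ∑ k, a (fun j => if k = j then 1 else 0) • g k with hh
    have hh0 : h = 0 := by
      ext x
      have hax : a (T x) = 0 := hap' _ (LinearMap.mem_range_self T x)
      rw [hexp] at hax
      simp only [hh, ContinuousLinearMap.sum_apply, ContinuousLinearMap.coe_smul',
        Pi.smul_apply, smul_eq_mul, ContinuousLinearMap.zero_apply]
      rw [Finset.sum_congr rfl (fun k _ => mul_comm (a fun j => if k = j then 1 else 0) (g k x))]
      have : ∀ k, T x k = g k x := fun k => rfl
      simpa [this] using hax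
    have hΦh : Φ h = a c := by
      rw [hh, map_sum, hexp c]
      refine Finset.sum_congr rfl fun k _ => ?_
      rw [map_smul, smul_eq_mul, mul_comm]
    rw [hh0, map_zero] at hΦh
    exact hac hΦh.symm

/-- Helly's theorem: finitely many linear constraints prescribed by a bidual element `Φ` can be
realized by a point of norm `< ‖Φ‖ + ε`. -/
lemma helly {E : Type*} [NormedAddCommGroup E] [NormedSpace ℝ E]
    (Φ : StrongDual ℝ (StrongDual ℝ E)) {ι : Type*} [Fintype ι] (g : ι → StrongDual ℝ E) {ε : ℝ} (hε : 0 < ε) :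
    ∃ x : E, (∀ k, g k x = Φ (g k)) ∧ ‖x‖ < ‖Φ‖ + ε := by
  classical
  obtain ⟨x₀, hx₀⟩ := helly_aux Φ g
  set K : Submodule ℝ E := ⨅ k, LinearMap.ker (g k : E →ₗ[ℝ] ℝ) with hK
  have hKc : IsClosed (K : Set E) := by
    have h1 : (K : Set E) = ⋂ k, (LinearMap.ker (g k : E →ₗ[ℝ] ℝ) : Set E) := by
      rw [hK]; exact Submodule.coe_iInf _
    rw [h1]
    exact isClosed_iInter fun k => ContinuousLinearMap.isClosed_ker (g k)
  haveI : IsClosed (K : Set E) := hKc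
  set mkC : E →L[ℝ] E ⧸ K :=
    LinearMap.mkContinuous K.mkQ 1
      (fun m => by simpa using Submodule.Quotient.norm_mk_le K m) with hmkC
  have hmkCapp : ∀ m : E, mkC m = Submodule.Quotient.mk m := fun m => rfl
  have claim : ‖(Submodule.Quotient.mk x₀ : E ⧸ K)‖ ≤ ‖Φ‖ := by
    by_contra hlt
    push_neg at hlt
    have hne : (Submodule.Quotient.mk x₀ : E ⧸ K) ≠ 0 := by
      intro h0
      rw [h0, norm_zero] at hlt
      exact absurd hlt (not_lt.2 (norm_nonneg Φ))
    obtain ⟨G, hG1, hGx⟩ := exists_dual_vector ℝ _ (norm_ne_zero_iff.2 hne)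
    set q : StrongDual ℝ E := G.comp mkC with hq
    have hmkCnorm : ‖mkC‖ ≤ 1 := LinearMap.mkContinuous_norm_le _ zero_le_one _
    have hqnorm : ‖q‖ ≤ 1 := by
      calc ‖q‖ ≤ ‖G‖ * ‖mkC‖ := ContinuousLinearMap.opNorm_comp_le _ _
        _ ≤ 1 * 1 := by rw [hG1]; simpa using hmkCnorm
        _ = 1 := one_mul 1
    have hker : (⨅ k, LinearMap.ker ((g k : E →ₗ[ℝ] ℝ))) ≤ LinearMap.ker (q : E →ₗ[ℝ] ℝ) := by
      intro y hy
      have hyK : y ∈ K := by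
        rw [hK]
        rw [Submodule.mem_iInf] at hy ⊢
        intro k
        exact hy k
      have hmk0 : (Submodule.Quotient.mk y : E ⧸ K) = 0 :=
        (Submodule.Quotient.mk_eq_zero K).2 hyK
      have : q y = 0 := by
        rw [hq]
        simp only [ContinuousLinearMap.comp_apply]
        rw [hmkCapp, hmk0, map_zero]
      simpa [LinearMap.mem_ker] using this
    have hspan := mem_span_of_iInf_ker_le_ker (L := fun k => ((g k) : E →ₗ[ℝ] ℝ)) hker
    obtain ⟨aco, ha⟩ := (Submodule.mem_span_range_iff_exists_fun ℝ).1 hspan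
    have hq' : q = ∑ k, aco k • g k := by
      apply ContinuousLinearMap.coe_injective
      rw [← ha]
      simp
    have hqx₀ : q x₀ = Φ q := by
      conv_lhs => rw [hq']
      conv_rhs => rw [hq', map_sum]
      simp only [ContinuousLinearMap.sum_apply, ContinuousLinearMap.coe_smul', Pi.smul_apply,
        smul_eq_mul, map_smul]
      exact Finset.sum_congr rfl fun k _ => by rw [hx₀ k]
    have hqx₀' : q x₀ = ‖(Submodule.Quotient.mk x₀ : E ⧸ K)‖ := by
      rw [hq]
      simpa [hmkCapp] using hGx
    have habs : |Φ q| ≤ ‖Φ‖ := by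
      calc |Φ q| ≤ ‖Φ‖ * ‖q‖ := (Φ.le_opNorm q)
        _ ≤ ‖Φ‖ * 1 := by gcongr
        _ = ‖Φ‖ := mul_one _
    rw [← hqx₀, hqx₀'] at habs
    rw [abs_of_nonneg (norm_nonneg _)] at habs
    linarith
  obtain ⟨m, hm1, hm2⟩ := Submodule.Quotient.norm_mk_lt (Submodule.Quotient.mk x₀ : E ⧸ K) hε
  refine ⟨m, ?_, lt_of_lt_of_le hm2 (by linarith)⟩
  intro k
  have hmem : m - x₀ ∈ K := (Submodule.Quotient.eq K).1 hm1
  rw [hK, Submodule.mem_iInf] at hmem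
  have hk0 : g k m - g k x₀ = 0 := by
    have := hmem k
    rw [LinearMap.mem_ker] at this
    simpa [map_sub] using this
  have : g k m = g k x₀ := by linarith
  rw [this, hx₀ k]

end Aux

section Aux2

set_option maxHeartbeats 2000000 in
lemma exists_james {Y : Type*} [NormedAddCommGroup Y] [NormedSpace ℝ Y] [CompleteSpace Y]
    (hns : ¬ Function.Surjective (inclusionInDoubleDual ℝ Y)) :
    ∃ (x : ℕ → Y) (f : ℕ → Y →L[ℝ] ℝ), (∀ n, ‖x n‖ ≤ 1) ∧ (∀ n, ‖f n‖ ≤ 1) ∧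
      (∀ k n, k ≤ n → f k (x n) = 1/2) ∧ (∀ k n, n < k → f k (x n) = 0) := by
  classical
  letI i1 : NormedAddCommGroup (StrongDual ℝ (StrongDual ℝ Y)) := ContinuousLinearMap.toNormedAddCommGroup
  letI i2 : NormedSpace ℝ (StrongDual ℝ (StrongDual ℝ Y)) := ContinuousLinearMap.toNormedSpace
  set J : Y →L[ℝ] StrongDual ℝ (StrongDual ℝ Y) := inclusionInDoubleDual ℝ Y with hJ
  set F : Submodule ℝ (StrongDual ℝ (StrongDual ℝ Y)) := LinearMap.range (J : Y →ₗ[ℝ] StrongDual ℝ (StrongDual ℝ Y)) with hF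
  have hFc : IsClosed (F : Set (StrongDual ℝ (StrongDual ℝ Y))) := by
    have h1 : (F : Set (StrongDual ℝ (StrongDual ℝ Y))) = Set.range J := LinearMap.coe_range _
    rw [h1]
    have hiso : Isometry (J : Y → StrongDual ℝ (StrongDual ℝ Y)) := (inclusionInDoubleDualLi ℝ (E := Y)).isometry
    exact hiso.isClosedEmbedding.isClosed_range
  obtain ⟨z, hz⟩ : ∃ z, z ∉ F := by
    rw [Function.Surjective] at hns
    push_neg at hns
    obtain ⟨z, hz⟩ := hns
    exact ⟨z, fun hmem => by obtain ⟨w, hw⟩ := hmem; exact hz w hw⟩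
  obtain ⟨u, huF, hu⟩ := riesz_lemma (𝕜 := ℝ) hFc ⟨z, hz⟩ (show (4/5 : ℝ) < 1 by norm_num)
  have hune : u ≠ 0 := fun h => huF (h ▸ F.zero_mem)
  have hunorm : 0 < ‖u‖ := by rw [norm_pos_iff (a := u)]; exact hune
  set s : ℝ := (9/10) * ‖u‖⁻¹ with hs
  have hspos : 0 < s := by positivity
  set Φ : StrongDual ℝ (StrongDual ℝ Y) := s • u with hΦ
  have hΦnorm : ‖Φ‖ = 9/10 := by
    rw [hΦ, norm_smul, Real.norm_eq_abs, abs_of_pos hspos, hs]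
    field_simp
  have hΦdist : ∀ y ∈ F, (18/25 : ℝ) ≤ ‖Φ - y‖ := by
    intro y hy
    have h1 : Φ - y = s • (u - s⁻¹ • y) := by
      rw [smul_sub, smul_smul, mul_inv_cancel₀ (ne_of_gt hspos), one_smul]
    have h2 : s⁻¹ • y ∈ F := F.smul_mem _ hy
    calc (18/25 : ℝ) = s * (4/5 * ‖u‖) := by rw [hs]; field_simp; ring
      _ ≤ s * ‖u - s⁻¹ • y‖ := by
          have := hu _ h2
          gcongr
      _ = ‖Φ - y‖ := by rw [h1, norm_smul, Real.norm_eq_abs, abs_of_pos hspos]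
  haveI : IsClosed (F : Set (StrongDual ℝ (StrongDual ℝ Y))) := hFc
  set d : ℝ := ‖(Submodule.Quotient.mk Φ : (StrongDual ℝ (StrongDual ℝ Y)) ⧸ F)‖ with hd
  have hdge : (18/25 : ℝ) ≤ d := by
    by_contra hlt
    push_neg at hlt
    obtain ⟨m, hm1, _⟩ := Submodule.Quotient.norm_mk_lt
      (Submodule.Quotient.mk Φ : (StrongDual ℝ (StrongDual ℝ Y)) ⧸ F)
      (show (0:ℝ) < 18/25 - d by linarith)
    have hmF : Φ - m ∈ F := by
      have := (Submodule.Quotient.eq F).1 hm1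
      exact (Submodule.neg_mem_iff F).1 (by simpa [neg_sub] using this)
    have : (18/25 : ℝ) ≤ ‖Φ - (Φ - m)‖ := hΦdist _ hmF
    simp only [sub_sub_cancel] at this
    rename_i hm2
    linarith
  have hdpos : 0 < d := lt_of_lt_of_le (by norm_num) hdge
  have hdne : (Submodule.Quotient.mk Φ : (StrongDual ℝ (StrongDual ℝ Y)) ⧸ F) ≠ 0 := by
    intro h0
    rw [hd, h0, norm_zero] at hdpos
    exact lt_irrefl 0 hdpos
  obtain ⟨G, hG1, hGΦ⟩ := exists_dual_vector ℝ _ (norm_ne_zero_iff.2 hdne)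
  set mkC : StrongDual ℝ (StrongDual ℝ Y) →L[ℝ] (StrongDual ℝ (StrongDual ℝ Y)) ⧸ F :=
    LinearMap.mkContinuous F.mkQ 1
      (fun m => by simpa using Submodule.Quotient.norm_mk_le F m) with hmkC
  have hmkCapp : ∀ m, mkC m = Submodule.Quotient.mk m := fun m => rfl
  set Ψ : StrongDual ℝ (StrongDual ℝ (StrongDual ℝ Y)) := ((1/2) / d) • (G.comp mkC) with hΨ
  have hΨnorm : ‖Ψ‖ ≤ 25/36 := by
    have hcomp : ‖G.comp mkC‖ ≤ 1 := by
      calc ‖G.comp mkC‖ ≤ ‖G‖ * ‖mkC‖ := ContinuousLinearMap.opNorm_comp_le _ _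
        _ ≤ 1 * 1 := by
            rw [hG1]
            simpa using LinearMap.mkContinuous_norm_le _ zero_le_one _
        _ = 1 := one_mul 1
    calc ‖Ψ‖ = |(1/2) / d| * ‖G.comp mkC‖ := by rw [hΨ, norm_smul, Real.norm_eq_abs]
      _ ≤ ((1/2) / d) * 1 := by
          rw [abs_of_pos (by positivity)]
          gcongr
      _ = (1/2) / d := mul_one _
      _ ≤ (1/2) / (18/25) := by
          apply div_le_div_of_nonneg_left (by norm_num) (by norm_num) hdge
      _ = 25/36 := by norm_num
  have hΨF : ∀ y ∈ F, Ψ y = 0 := by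
    intro y hy
    rw [hΨ]
    simp only [ContinuousLinearMap.coe_smul', Pi.smul_apply, ContinuousLinearMap.comp_apply]
    rw [hmkCapp, (Submodule.Quotient.mk_eq_zero F).2 hy, map_zero, smul_zero]
  have hΨΦ : Ψ Φ = 1/2 := by
    rw [hΨ]
    simp only [ContinuousLinearMap.coe_smul', Pi.smul_apply, ContinuousLinearMap.comp_apply]
    rw [hmkCapp, hGΦ, ← hd, smul_eq_mul]
    field_simp
    rfl
  set P : Y × (Y →L[ℝ] ℝ) → Prop :=
    fun a => ‖a.1‖ ≤ 1 ∧ ‖a.2‖ ≤ 1 ∧ Φ a.2 = 1/2 ∧ a.2 a.1 = 1/2 with hP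
  set r : Y × (Y →L[ℝ] ℝ) → Y × (Y →L[ℝ] ℝ) → Prop :=
    fun a b => b.2 a.1 = 0 ∧ a.2 b.1 = 1/2 with hr
  have hstep : ∀ t : Finset (Y × (Y →L[ℝ] ℝ)), (∀ a ∈ t, P a) → ∃ b, P b ∧ ∀ a ∈ t, r a b := by
    intro t ht
    obtain ⟨f, hfval, hfnorm⟩ := helly Ψ
      (fun k : Option {a // a ∈ t} => Option.elim k Φ (fun a => J a.1.1))
      (show (0:ℝ) < 1/4 by norm_num)
    have hfΦ : Φ f = 1/2 := by
      have := hfval none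
      simpa [hΨΦ] using this
    have hfzero : ∀ a ∈ t, f a.1 = 0 := by
      intro a ha
      have := hfval (some ⟨a, ha⟩)
      simp only [Option.elim] at this
      have hmem : J a.1 ∈ F := LinearMap.mem_range_self _ _
      rw [hΨF _ hmem] at this
      simpa [hJ, dual_def] using this
    have hfnorm1 : ‖f‖ ≤ 1 := by
      have : ‖Ψ‖ + 1/4 ≤ 1 := by linarith
      linarith [hfnorm]
    obtain ⟨xx, hxval, hxnorm⟩ := helly Φ
      (fun k : Option {a // a ∈ t} => Option.elim k f (fun a => a.1.2))
      (show (0:ℝ) < 1/10 by norm_num)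
    have hxf : f xx = 1/2 := by
      have := hxval none
      simpa [hfΦ] using this
    have hxa : ∀ a ∈ t, a.2 xx = 1/2 := by
      intro a ha
      have := hxval (some ⟨a, ha⟩)
      simp only [Option.elim] at this
      rw [this, (ht a ha).2.2.1]
    have hxnorm1 : ‖xx‖ ≤ 1 := by
      rw [hΦnorm] at hxnorm
      linarith
    exact ⟨(xx, f), ⟨hxnorm1, hfnorm1, hfΦ, hxf⟩, fun a ha => ⟨hfzero a ha, hxa a ha⟩⟩
  obtain ⟨seq, hseqP, hseqr⟩ := exists_seq_of_forall_finset_exists P r hstep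
  refine ⟨fun n => (seq n).1, fun n => (seq n).2, fun n => (hseqP n).1, fun n => (hseqP n).2.1,
    ?_, ?_⟩
  · intro k n hkn
    rcases lt_or_eq_of_le hkn with h | h
    · exact (hseqr k n h).2
    · rw [h]; exact (hseqP n).2.2.2
  · intro k n hnk
    exact (hseqr n k hnk).1

set_option maxHeartbeats 1000000 in
lemma forward_step {Y : Type*} [NormedAddCommGroup Y] [NormedSpace ℝ Y]
    (hsurj : Function.Surjective (inclusionInDoubleDual ℝ Y))
    (x : ℕ → Y) (hx : ∀ n, ‖x n‖ ≤ 1) {ε : ℝ} (hε : 0 < ε) :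
    ∃ z, IsConvexBlock x z ∧ ∀ a b : ℕ, ‖z a - z b‖ ≤ ε := by
  classical
  set J : Y →L[ℝ] StrongDual ℝ (StrongDual ℝ Y) := inclusionInDoubleDual ℝ Y with hJ
  set u : ℕ → WeakDual ℝ (StrongDual ℝ Y) := fun n => StrongDual.toWeakDual (J (x n)) with hu
  have humem : ∀ n, u n ∈ (WeakDual.toStrongDual ⁻¹' closedBall 0 1 :
      Set (WeakDual ℝ (StrongDual ℝ Y))) := by
    intro n
    have h1 : WeakDual.toStrongDual (u n) = J (x n) := rfl
    simp only [Set.mem_preimage, h1, mem_closedBall_zero_iff]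
    refine (mem_closedBall_zero_iff (E := StrongDual ℝ (StrongDual ℝ Y))).2 ?_
    calc ‖J (x n)‖ ≤ ‖x n‖ := double_dual_bound ℝ Y (x n)
      _ ≤ 1 := hx n
  have hle : Filter.map u atTop ≤ 𝓟 (WeakDual.toStrongDual ⁻¹' closedBall 0 1) := by
    rw [Filter.le_principal_iff]
    exact Filter.mem_map.2 (Filter.Eventually.of_forall humem)
  obtain ⟨Φw, _, hclus⟩ :=
    (WeakDual.isCompact_closedBall (𝕜 := ℝ) (E := StrongDual ℝ Y) 0 1).exists_mapClusterPt hle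
  obtain ⟨v, hv⟩ := hsurj (WeakDual.toStrongDual Φw)
  have key : ∀ N : ℕ, v ∈ closure (convexHull ℝ (x '' Set.Ici N)) := by
    intro N
    by_contra hvc
    obtain ⟨f, c, hfv, hfC⟩ := geometric_hahn_banach_point_closed
      (Convex.closure (convex_convexHull ℝ _)) isClosed_closure hvc
    have hfΦ : Φw f = f v := by
      have h1 : Φw f = (WeakDual.toStrongDual Φw) f := rfl
      rw [h1, ← hv]
      exact dual_def ℝ Y v f
    have hclus2 : MapClusterPt (Φw f) atTop (fun n => (u n) f) :=
      hclus.continuousAt_comp (WeakDual.eval_continuous f).continuousAt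
    rw [hfΦ] at hclus2
    have hfreq : ∃ᶠ n in atTop, f (x n) < c :=
      mapClusterPt_iff_frequently.1 hclus2 (Set.Iio c) (Iio_mem_nhds hfv)
    obtain ⟨n, hnN, hlt⟩ := Filter.frequently_atTop.1 hfreq N
    have hmem : x n ∈ closure (convexHull ℝ (x '' Set.Ici N)) :=
      subset_closure (subset_convexHull ℝ _ ⟨n, hnN, rfl⟩)
    exact absurd hlt (not_lt.2 (le_of_lt (hfC _ hmem)))
  have step : ∀ N : ℕ, ∃ M : ℕ, N < M ∧
      ∃ y, y ∈ convexHull ℝ (x '' Set.Ico N M) ∧ ‖y - v‖ ≤ ε/2 := by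
    intro N
    have h1 := key N
    rw [Metric.mem_closure_iff] at h1
    obtain ⟨y, hy, hdy⟩ := h1 (ε/2) (by positivity)
    rw [convexHull_eq_union_convexHull_finite_subsets] at hy
    simp only [Set.mem_iUnion] at hy
    obtain ⟨t, ht, hyt⟩ := hy
    have hchoice : ∀ w ∈ t, ∃ n : ℕ, N ≤ n ∧ x n = w := by
      intro w hw
      obtain ⟨n, hn, rfl⟩ := ht hw
      exact ⟨n, hn, rfl⟩
    choose! g hg1 hg2 using hchoice
    set M : ℕ := max (N + 1) ((t.sup g) + 1) with hM
    refine ⟨M, lt_of_lt_of_le (Nat.lt_succ_self N) (le_max_left _ _), y, ?_, ?_⟩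
    · refine convexHull_mono ?_ hyt
      intro w hw
      refine ⟨g w, ⟨hg1 w hw, ?_⟩, hg2 w hw⟩
      calc g w < (t.sup g) + 1 := Nat.lt_succ_of_le (Finset.le_sup hw)
        _ ≤ M := le_max_right _ _
    · rw [← dist_eq_norm, dist_comm]
      exact le_of_lt hdy
  choose Mf hMlt yf hymem hyclose using step
  set k : ℕ → ℕ := fun m => Nat.rec 0 (fun _ ih => Mf ih) m with hk
  have hk0 : k 0 = 0 := rfl
  have hksucc : ∀ m, k (m + 1) = Mf (k m) := fun m => rfl
  have hkmono : StrictMono k :=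
    strictMono_nat_of_lt_succ (fun m => by rw [hksucc]; exact hMlt (k m))
  refine ⟨fun m => yf (k m), ⟨k, hk0, hkmono, fun m => by rw [hksucc]; exact hymem (k m)⟩, ?_⟩
  intro a b
  calc ‖yf (k a) - yf (k b)‖ = ‖(yf (k a) - v) - (yf (k b) - v)‖ := by
        rw [sub_sub_sub_cancel_right]
    _ ≤ ‖yf (k a) - v‖ + ‖yf (k b) - v‖ := norm_sub_le _ _
    _ ≤ ε/2 + ε/2 := add_le_add (hyclose (k a)) (hyclose (k b))
    _ = ε := by ring

end Aux2

section Main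

lemma james_lb {Y : Type*} [NormedAddCommGroup Y] [NormedSpace ℝ Y]
    {x : ℕ → Y} {f : ℕ → Y →L[ℝ] ℝ} (hx1 : ∀ n, ‖x n‖ ≤ 1) (hf1 : ∀ n, ‖f n‖ ≤ 1)
    (hθ : ∀ k n, k ≤ n → f k (x n) = 1/2) (h0 : ∀ k n, n < k → f k (x n) = 0)
    {z : ℕ → Y} (hz : IsConvexBlock x z) : (1/2 : ℝ) ≤ caSeq z := by
  have hzb : ∀ n, ‖z n‖ ≤ 1 := isConvexBlock_norm_le hx1 hz
  obtain ⟨k, hk0, hkm, hmem⟩ := hz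
  apply caSeq_ge_of_sep hzb
  intro n
  have h₁ : f (k (n + 1)) (z n) = 0 := by
    refine eval_convexHull_const (f (k (n + 1))) ?_ (hmem n)
    rintro _ ⟨m, ⟨hm1, hm2⟩, rfl⟩
    exact h0 (k (n + 1)) m hm2
  have h₂ : f (k (n + 1)) (z (n + 1)) = 1/2 := by
    refine eval_convexHull_const (f (k (n + 1))) ?_ (hmem (n + 1))
    rintro _ ⟨m, ⟨hm1, hm2⟩, rfl⟩
    exact hθ (k (n + 1)) m hm1
  have hval : f (k (n + 1)) (z (n + 1) - z n) = 1/2 := by rw [map_sub, h₁, h₂, sub_zero]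
  calc (1/2 : ℝ) = |f (k (n + 1)) (z (n + 1) - z n)| := by
        rw [hval]
        exact (abs_of_pos (by norm_num)).symm
    _ ≤ ‖f (k (n + 1))‖ * ‖z (n + 1) - z n‖ := by
        rw [← Real.norm_eq_abs]
        exact (f (k (n + 1))).le_opNorm _
    _ ≤ 1 * ‖z (n + 1) - z n‖ :=
        mul_le_mul_of_nonneg_right (hf1 (k (n + 1))) (norm_nonneg _)
    _ = ‖z (n + 1) - z n‖ := one_mul _

end Main

theorem stmt13 {X : Type*} [NormedAddCommGroup X] [NormedSpace ℝ X] [CompleteSpace X] :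
    Function.Surjective (inclusionInDoubleDual ℝ X) ↔ RQ X = 0 := by
  constructor
  · intro hsurj
    have key : ∀ x : ℕ → X, (∀ n, x n ∈ closedBall (0 : X) 1) →
        sInf { s | ∃ z, IsConvexBlock x z ∧ s = caSeq z } = 0 := by
      intro x hx
      have hx' : ∀ n, ‖x n‖ ≤ 1 := fun n => mem_closedBall_zero_iff.1 (hx n)
      have hlb : ∀ s ∈ { s | ∃ z, IsConvexBlock x z ∧ s = caSeq z }, (0 : ℝ) ≤ s := by
        rintro s ⟨z, hz, rfl⟩
        exact caSeq_nonneg (isConvexBlock_norm_le hx' hz)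
      have hne : ({ s | ∃ z, IsConvexBlock x z ∧ s = caSeq z }).Nonempty :=
        ⟨caSeq x, x, isConvexBlock_self x, rfl⟩
      apply le_antisymm
      · by_contra hpos
        push_neg at hpos
        obtain ⟨z, hzb, hzbd⟩ := forward_step hsurj x hx' (half_pos hpos)
        have h1 : sInf { s | ∃ z, IsConvexBlock x z ∧ s = caSeq z } ≤ caSeq z :=
          csInf_le ⟨0, hlb⟩ ⟨z, hzb, rfl⟩
        have h2 : caSeq z ≤ sInf { s | ∃ z, IsConvexBlock x z ∧ s = caSeq z } / 2 :=
          caSeq_le_of_bound hzbd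
        linarith
      · exact le_csInf hne hlb
    have hset : { r | ∃ x : ℕ → X, (∀ n, x n ∈ closedBall (0 : X) 1) ∧
        r = sInf { s | ∃ z, IsConvexBlock x z ∧ s = caSeq z } } = {0} := by
      ext r
      simp only [Set.mem_setOf_eq, Set.mem_singleton_iff]
      constructor
      · rintro ⟨x, hx, rfl⟩
        exact key x hx
      · rintro rfl
        exact ⟨fun _ => 0, fun n => mem_closedBall_self zero_le_one,
          (key _ (fun n => mem_closedBall_self zero_le_one)).symm⟩
    rw [RQ, hset, csSup_singleton]
  · intro hRQ
    by_contra hns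
    obtain ⟨x, f, hx1, hf1, hθ, h0⟩ := exists_james hns
    have hub : ∀ r ∈ { r | ∃ x : ℕ → X, (∀ n, x n ∈ closedBall (0 : X) 1) ∧
        r = sInf { s | ∃ z, IsConvexBlock x z ∧ s = caSeq z } }, r ≤ 2 := by
      rintro r ⟨y, hy, rfl⟩
      have hy' : ∀ n, ‖y n‖ ≤ 1 := fun n => mem_closedBall_zero_iff.1 (hy n)
      have hlb : ∀ s ∈ { s | ∃ z, IsConvexBlock y z ∧ s = caSeq z }, (0 : ℝ) ≤ s := by
        rintro s ⟨z, hz, rfl⟩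
        exact caSeq_nonneg (isConvexBlock_norm_le hy' hz)
      have hmem' : caSeq y ∈ { s | ∃ z, IsConvexBlock y z ∧ s = caSeq z } :=
        ⟨y, isConvexBlock_self y, rfl⟩
      refine csInf_le_of_le ⟨0, hlb⟩ hmem' ?_
      refine caSeq_le_of_bound (fun a b => ?_)
      calc ‖y a - y b‖ ≤ ‖y a‖ + ‖y b‖ := norm_sub_le _ _
        _ ≤ 2 := by linarith [hy' a, hy' b]
    have hr : (1/2 : ℝ) ≤ sInf { s | ∃ z, IsConvexBlock x z ∧ s = caSeq z } := by
      have hne : ({ s | ∃ z, IsConvexBlock x z ∧ s = caSeq z }).Nonempty :=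
        ⟨caSeq x, ⟨x, isConvexBlock_self x, rfl⟩⟩
      apply le_csInf hne
      rintro s ⟨z, hz, rfl⟩
      exact james_lb hx1 hf1 hθ h0 hz
    have hmem : sInf { s | ∃ z, IsConvexBlock x z ∧ s = caSeq z } ∈
        { r | ∃ x : ℕ → X, (∀ n, x n ∈ closedBall (0 : X) 1) ∧
          r = sInf { s | ∃ z, IsConvexBlock x z ∧ s = caSeq z } } :=
      ⟨x, fun n => mem_closedBall_zero_iff.2 (hx1 n), rfl⟩
    have hle : sInf { s | ∃ z, IsConvexBlock x z ∧ s = caSeq z } ≤ RQ X := by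
      rw [RQ]
      exact le_csSup ⟨2, hub⟩ hmem
    rw [hRQ] at hle
    linarith
end
end

section
/- If a Banach space X contains a subspace isomorphic to ℓ₁, then R(X) = 2. In particular R(ℓ₁) = 2, where R(X) = sup over sequences (x_n) in B_X of inf over convex block subsequences (z_n) of ca((z_n)). -/
open Filter Topology Metric Set NormedSpace

noncomputable section

variable (X : Type*) [NormedAddCommGroup X] [NormedSpace ℝ X]

variable {X}

variable (X)

namespace Stmt15Aux

abbrev E1 := lp (fun _ : ℕ => ℝ) 1

def ee (i : ℕ) : E1 := lp.single 1 i 1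

lemma norm_comb (s : Finset ℕ) (a : ℕ → ℝ) :
    ‖∑ i ∈ s, a i • ee i‖ = ∑ i ∈ s, |a i| := by
  have h1 : ∀ i : ℕ, a i • ee i = lp.single 1 i (a i) := by
    intro i
    rw [ee, ← lp.single_smul]
    norm_num
  have := lp.norm_sum_single (p := 1) (by norm_num) a s
  simp only [Real.rpow_one, ENNReal.toReal_one] at this
  calc ‖∑ i ∈ s, a i • ee i‖ = ‖∑ i ∈ s, lp.single 1 i (a i)‖ := by
        simp_rw [h1]
    _ = ∑ i ∈ s, ‖a i‖ := this
    _ = ∑ i ∈ s, |a i| := by simp [Real.norm_eq_abs]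

section James

variable {X : Type*} [NormedAddCommGroup X] [NormedSpace ℝ X]
variable (T : E1 →L[ℝ] X) (c : ℝ)

def Phi (s : Finset ℕ) (a : ℕ → ℝ) : X := ∑ i ∈ s, a i • T (ee i)

lemma Phi_eq (s : Finset ℕ) (a : ℕ → ℝ) : Phi T s a = T (∑ i ∈ s, a i • ee i) := by
  rw [Phi, map_sum]
  simp

lemma Phi_lower (hc : ∀ v, c * ‖v‖ ≤ ‖T v‖) (s : Finset ℕ) (a : ℕ → ℝ) :
    c * ∑ i ∈ s, |a i| ≤ ‖Phi T s a‖ := by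
  rw [Phi_eq, ← norm_comb]
  exact hc _

lemma Phi_upper (s : Finset ℕ) (a : ℕ → ℝ) :
    ‖Phi T s a‖ ≤ ‖T‖ * ∑ i ∈ s, |a i| := by
  rw [Phi_eq]
  calc ‖T (∑ i ∈ s, a i • ee i)‖ ≤ ‖T‖ * ‖∑ i ∈ s, a i • ee i‖ := T.le_opNorm _
    _ = ‖T‖ * ∑ i ∈ s, |a i| := by rw [norm_comb]

/-- the set of norms of normalized blocks supported beyond `n` -/
def gset (n : ℕ) : Set ℝ :=
  { r | ∃ s : Finset ℕ, ∃ a : ℕ → ℝ, (∀ i ∈ s, n ≤ i) ∧ (∑ i ∈ s, |a i|) = 1 ∧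
      r = ‖Phi T s a‖ }

lemma gset_nonempty (n : ℕ) : (gset T n).Nonempty :=
  ⟨‖Phi T {n} (fun _ => 1)‖, {n}, fun _ => 1, by simp, by simp, rfl⟩

lemma gset_mem_ge (hc : ∀ v, c * ‖v‖ ≤ ‖T v‖) (n : ℕ) {r : ℝ} (hr : r ∈ gset T n) :
    c ≤ r := by
  obtain ⟨s, a, -, h1, rfl⟩ := hr
  have := Phi_lower T c hc s a
  rw [h1, mul_one] at this
  exact this

lemma gset_bddBelow (hc : ∀ v, c * ‖v‖ ≤ ‖T v‖) (n : ℕ) : BddBelow (gset T n) :=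
  ⟨c, fun r hr => gset_mem_ge T c hc n hr⟩

def gam (n : ℕ) : ℝ := sInf (gset T n)

lemma gam_ge (hc : ∀ v, c * ‖v‖ ≤ ‖T v‖) (n : ℕ) : c ≤ gam T n :=
  le_csInf (gset_nonempty T n) (fun r hr => gset_mem_ge T c hc n hr)

lemma gam_le (hc : ∀ v, c * ‖v‖ ≤ ‖T v‖) (n : ℕ) : gam T n ≤ ‖T‖ := by
  have h1 : ‖Phi T {n} (fun _ => 1)‖ ∈ gset T n :=
    ⟨{n}, fun _ => 1, by simp, by simp, rfl⟩
  have h2 : gam T n ≤ ‖Phi T {n} (fun _ => 1)‖ := csInf_le (gset_bddBelow T c hc n) h1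
  refine h2.trans ?_
  have := Phi_upper T {n} (fun _ => 1)
  simpa using this

lemma gam_mono (hc : ∀ v, c * ‖v‖ ≤ ‖T v‖) : Monotone (gam T) := by
  intro n m hnm
  refine csInf_le_csInf (gset_bddBelow T c hc n) (gset_nonempty T m) ?_
  rintro r ⟨s, a, hs, h1, rfl⟩
  exact ⟨s, a, fun i hi => hnm.trans (hs i hi), h1, rfl⟩

def gsup : ℝ := ⨆ n, gam T n

lemma gam_le_gsup (hc : ∀ v, c * ‖v‖ ≤ ‖T v‖) (n : ℕ) : gam T n ≤ gsup T :=
  le_ciSup ⟨‖T‖, by rintro r ⟨n, rfl⟩; exact gam_le T c hc n⟩ n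

lemma gsup_ge (hc : ∀ v, c * ‖v‖ ≤ ‖T v‖) : c ≤ gsup T :=
  (gam_ge T c hc 0).trans (gam_le_gsup T c hc 0)

/-- homogeneous lower bound -/
lemma gam_lower (hc : ∀ v, c * ‖v‖ ≤ ‖T v‖) (hcpos : 0 < c) (n : ℕ) (s : Finset ℕ)
    (a : ℕ → ℝ) (hs : ∀ i ∈ s, n ≤ i) :
    gam T n * ∑ i ∈ s, |a i| ≤ ‖Phi T s a‖ := by
  set σ := ∑ i ∈ s, |a i| with hσ
  rcases eq_or_lt_of_le (Finset.sum_nonneg (fun i _ => abs_nonneg (a i))) with h0 | hpos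
  · -- σ = 0 : all coefficients vanish
    have hz : ∀ i ∈ s, a i = 0 := by
      intro i hi
      have := (Finset.sum_eq_zero_iff_of_nonneg (fun i _ => abs_nonneg (a i))).1 h0.symm i hi
      exact abs_eq_zero.1 this
    have : Phi T s a = 0 := Finset.sum_eq_zero (fun i hi => by rw [hz i hi, zero_smul])
    rw [this, norm_zero, hσ, ← h0, mul_zero]
  · have h1 : (∑ i ∈ s, |σ⁻¹ * a i|) = 1 := by
      have : ∀ i ∈ s, |σ⁻¹ * a i| = σ⁻¹ * |a i| := by
        intro i _
        rw [abs_mul, abs_of_nonneg (inv_nonneg.2 hpos.le)]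
      rw [Finset.sum_congr rfl this, ← Finset.mul_sum, ← hσ, inv_mul_cancel₀ hpos.ne']
    have hmem : ‖Phi T s (fun i => σ⁻¹ * a i)‖ ∈ gset T n := ⟨s, _, hs, h1, rfl⟩
    have h2 : gam T n ≤ ‖Phi T s (fun i => σ⁻¹ * a i)‖ := csInf_le (gset_bddBelow T c hc n) hmem
    have h3 : Phi T s (fun i => σ⁻¹ * a i) = σ⁻¹ • Phi T s a := by
      rw [Phi, Phi, Finset.smul_sum]
      exact Finset.sum_congr rfl fun i _ => (smul_smul σ⁻¹ (a i) (T (ee i))).symm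
    rw [h3, norm_smul, Real.norm_eq_abs, abs_of_nonneg (inv_nonneg.2 hpos.le)] at h2
    calc gam T n * σ ≤ (σ⁻¹ * ‖Phi T s a‖) * σ := by
          exact mul_le_mul_of_nonneg_right h2 hpos.le
      _ = ‖Phi T s a‖ := by
          have hσ0 : σ ≠ 0 := hpos.ne'
          rw [mul_comm, ← mul_assoc, mul_inv_cancel₀ hσ0, one_mul]

lemma extract (hc : ∀ v, c * ‖v‖ ≤ ‖T v‖) (η : ℝ) (hη : 0 < η) (n : ℕ) :
    ∃ p : Finset ℕ × (ℕ → ℝ), (∀ i ∈ p.1, n ≤ i) ∧ (∑ i ∈ p.1, |p.2 i|) = 1 ∧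
      ‖Phi T p.1 p.2‖ < gsup T + η := by
  have h : sInf (gset T n) < gam T n + η := lt_add_of_pos_right _ hη
  obtain ⟨r, hr, hlt⟩ := exists_lt_of_csInf_lt (gset_nonempty T n) h
  obtain ⟨s, a, hs, h1, rfl⟩ := hr
  exact ⟨(s, a), hs, h1, hlt.trans_le (add_le_add_left (gam_le_gsup T c hc n) η)⟩

def pick (hc : ∀ v, c * ‖v‖ ≤ ‖T v‖) (η : ℝ) (hη : 0 < η) (n : ℕ) : Finset ℕ × (ℕ → ℝ) :=
  (extract T c hc η hη n).choose

lemma pick_spec (hc : ∀ v, c * ‖v‖ ≤ ‖T v‖) (η : ℝ) (hη : 0 < η) (n : ℕ) :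
    (∀ i ∈ (pick T c hc η hη n).1, n ≤ i) ∧ (∑ i ∈ (pick T c hc η hη n).1, |(pick T c hc η hη n).2 i|) = 1 ∧
      ‖Phi T (pick T c hc η hη n).1 (pick T c hc η hη n).2‖ < gsup T + η :=
  (extract T c hc η hη n).choose_spec

theorem james (hc : ∀ v, c * ‖v‖ ≤ ‖T v‖) (hcpos : 0 < c) (ε : ℝ) (hε : 0 < ε) :
    ∃ u : ℕ → X, (∀ j, ‖u j‖ ≤ 1) ∧
      ∀ (F : Finset ℕ) (t : ℕ → ℝ), (1 - ε) * ∑ j ∈ F, |t j| ≤ ‖∑ j ∈ F, t j • u j‖ := by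
  set g := gsup T with hgdef
  have hcg : c ≤ g := gsup_ge T c hc
  set η : ℝ := ε * c / 3 with hηdef
  have hη : 0 < η := by positivity
  obtain ⟨n0, hn0⟩ : ∃ n0, g - η < gam T n0 := by
    exact exists_lt_of_lt_ciSup (sub_lt_self g hη)
  set k : ℕ → ℕ := fun j => Nat.rec n0 (fun _ kj => ((pick T c hc η hη kj).1.sup id) + 1) j
    with hkdef
  have hk0 : k 0 = n0 := rfl
  have hksucc : ∀ j, k (j + 1) = ((pick T c hc η hη (k j)).1.sup id) + 1 := fun j => rfl
  set s : ℕ → Finset ℕ := fun j => (pick T c hc η hη (k j)).1 with hsdef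
  set a : ℕ → ℕ → ℝ := fun j => (pick T c hc η hη (k j)).2 with hadef
  set P : ℕ → X := fun j => Phi T (s j) (a j) with hPdef
  have hsupp : ∀ j, ∀ i ∈ s j, k j ≤ i := fun j => (pick_spec T c hc η hη (k j)).1
  have hsum : ∀ j, (∑ i ∈ s j, |a j i|) = 1 := fun j => (pick_spec T c hc η hη (k j)).2.1
  have hnorm : ∀ j, ‖P j‖ < g + η := fun j => (pick_spec T c hc η hη (k j)).2.2
  have hgη : 0 < g + η := by linarith
  have hPlow : ∀ j, c ≤ ‖P j‖ := by
    intro j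
    have := Phi_lower T c hc (s j) (a j)
    rw [hsum j, mul_one] at this
    exact this
  have hPpos : ∀ j, 0 < ‖P j‖ := fun j => lt_of_lt_of_le hcpos (hPlow j)
  have hlt : ∀ j, ∀ i ∈ s j, i < k (j + 1) := by
    intro j i hi
    rw [hksucc j]
    exact Nat.lt_succ_of_le (Finset.le_sup (f := id) hi)
  have hkmono : Monotone k := by
    refine monotone_nat_of_le_succ (fun j => ?_)
    have hne : (s j).Nonempty := by
      rcases Finset.eq_empty_or_nonempty (s j) with h | h
      · exfalso; have := hsum j; rw [h] at this; simp at this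
      · exact h
    obtain ⟨i, hi⟩ := hne
    exact le_trans (hsupp j i hi) (le_of_lt (hlt j i hi))
  have hkn0 : ∀ j, n0 ≤ k j := fun j => hk0 ▸ hkmono (Nat.zero_le j)
  have hdisj : ∀ ⦃j j' : ℕ⦄, j < j' → ∀ i ∈ s j, i ∉ s j' := by
    intro j j' hjj' i hi hi'
    have h1 : i < k (j + 1) := hlt j i hi
    have h2 : k j' ≤ i := hsupp j' i hi'
    have h3 : k (j + 1) ≤ k j' := hkmono hjj'
    omega
  set u : ℕ → X := fun j => ‖P j‖⁻¹ • P j with hudef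
  have hu1 : ∀ j, ‖u j‖ = 1 := by
    intro j
    rw [hudef]
    simp only [norm_smul, norm_inv, norm_norm]
    exact inv_mul_cancel₀ (hPpos j).ne'
  refine ⟨u, fun j => (hu1 j).le, ?_⟩
  intro F t
  classical
  set S : Finset ℕ := F.biUnion s with hSdef
  set A : ℕ → ℝ := fun i => ∑ j ∈ F, if i ∈ s j then t j * ‖P j‖⁻¹ * a j i else 0 with hAdef
  have hpd : (↑F : Set ℕ).PairwiseDisjoint s := by
    intro j hj j' hj' hne
    rcases lt_or_gt_of_ne hne with h | h
    · exact Finset.disjoint_left.2 (fun i hi hi' => hdisj h i hi hi')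
    · exact (Finset.disjoint_left.2 (fun i hi hi' => hdisj h i hi hi')).symm
  have hAval : ∀ j ∈ F, ∀ i ∈ s j, A i = t j * ‖P j‖⁻¹ * a j i := by
    intro j hj i hi
    rw [hAdef]
    refine Finset.sum_eq_single_of_mem j hj ?_ |>.trans (if_pos hi)
    intro j' hj' hne
    refine if_neg (fun hi' => ?_)
    rcases lt_or_gt_of_ne hne with h | h
    · exact hdisj h i hi' hi
    · exact hdisj h i hi hi'
  have claim1 : Phi T S A = ∑ j ∈ F, t j • u j := by
    rw [Phi, hSdef, Finset.sum_biUnion hpd]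
    refine Finset.sum_congr rfl (fun j hj => ?_)
    calc ∑ i ∈ s j, A i • T (ee i)
        = ∑ i ∈ s j, (t j * ‖P j‖⁻¹) • (a j i • T (ee i)) := by
          refine Finset.sum_congr rfl (fun i hi => ?_)
          rw [hAval j hj i hi, smul_smul]
      _ = (t j * ‖P j‖⁻¹) • Phi T (s j) (a j) := by rw [← Finset.smul_sum]; rfl
      _ = t j • u j := by rw [hudef, mul_smul]
  have claim2 : ∑ i ∈ S, |A i| = ∑ j ∈ F, |t j| * ‖P j‖⁻¹ := by
    rw [hSdef, Finset.sum_biUnion hpd]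
    refine Finset.sum_congr rfl (fun j hj => ?_)
    calc ∑ i ∈ s j, |A i| = ∑ i ∈ s j, |t j| * ‖P j‖⁻¹ * |a j i| := by
          refine Finset.sum_congr rfl (fun i hi => ?_)
          rw [hAval j hj i hi, abs_mul, abs_mul, abs_of_nonneg (inv_nonneg.2 (hPpos j).le)]
      _ = |t j| * ‖P j‖⁻¹ := by rw [← Finset.mul_sum, hsum j, mul_one]
  have hSsupp : ∀ i ∈ S, n0 ≤ i := by
    intro i hi
    obtain ⟨j, hjF, hij⟩ := Finset.mem_biUnion.1 hi
    exact le_trans (hkn0 j) (hsupp j i hij)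
  have hgam0 : 0 ≤ gam T n0 := le_trans hcpos.le (gam_ge T c hc n0)
  have step1 : gam T n0 * ∑ i ∈ S, |A i| ≤ ‖Phi T S A‖ :=
    gam_lower T c hc hcpos n0 S A hSsupp
  have step2 : ∑ j ∈ F, |t j| * (g + η)⁻¹ ≤ ∑ j ∈ F, |t j| * ‖P j‖⁻¹ := by
    refine Finset.sum_le_sum (fun j hj => ?_)
    refine mul_le_mul_of_nonneg_left ?_ (abs_nonneg _)
    exact inv_anti₀ (hPpos j) (hnorm j).le
  have hkey : (1 - ε) ≤ gam T n0 * (g + η)⁻¹ := by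
    rw [le_mul_inv_iff₀ hgη]
    have h1 : ε * c ≤ ε * g := mul_le_mul_of_nonneg_left hcg hε.le
    have h2 : 0 ≤ ε * η := mul_nonneg hε.le hη.le
    nlinarith [hn0]
  calc (1 - ε) * ∑ j ∈ F, |t j|
      ≤ (gam T n0 * (g + η)⁻¹) * ∑ j ∈ F, |t j| := by
        refine mul_le_mul_of_nonneg_right hkey ?_
        exact Finset.sum_nonneg (fun j _ => abs_nonneg _)
    _ = gam T n0 * ∑ j ∈ F, |t j| * (g + η)⁻¹ := by
        rw [← Finset.sum_mul]; ring
    _ ≤ gam T n0 * ∑ j ∈ F, |t j| * ‖P j‖⁻¹ := mul_le_mul_of_nonneg_left step2 hgam0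
    _ = gam T n0 * ∑ i ∈ S, |A i| := by rw [claim2]
    _ ≤ ‖Phi T S A‖ := step1
    _ = ‖∑ j ∈ F, t j • u j‖ := by rw [claim1]

end James

section Hull

variable {X : Type*} [NormedAddCommGroup X] [NormedSpace ℝ X]

lemma hull_coeffs {u : ℕ → X} {p q : ℕ} {y : X}
    (hy : y ∈ convexHull ℝ (u '' Set.Ico p q)) :
    ∃ w : ℕ → ℝ, (∀ i, 0 ≤ w i) ∧ (∑ i ∈ Finset.Ico p q, w i) = 1 ∧
      y = ∑ i ∈ Finset.Ico p q, w i • u i := by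
  classical
  rw [convexHull_eq] at hy
  obtain ⟨ι, tt, w, z, hw0, hw1, hz, hy⟩ := hy
  rw [Finset.centerMass_eq_of_sum_1 _ _ hw1] at hy
  have hg : ∀ i ∈ tt, ∃ m, m ∈ Finset.Ico p q ∧ u m = z i := by
    intro i hi
    obtain ⟨m, hm, hum⟩ := hz i hi
    exact ⟨m, by simpa [Finset.mem_Ico] using (Set.mem_Ico.1 hm), hum⟩
  set gg : ι → ℕ := fun i => if h : ∃ m, m ∈ Finset.Ico p q ∧ u m = z i then h.choose else p
    with hggdef
  have hgmem : ∀ i ∈ tt, gg i ∈ Finset.Ico p q := by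
    intro i hi
    rw [hggdef]
    simp only [dif_pos (hg i hi)]
    exact (hg i hi).choose_spec.1
  have hgval : ∀ i ∈ tt, u (gg i) = z i := by
    intro i hi
    rw [hggdef]
    simp only [dif_pos (hg i hi)]
    exact (hg i hi).choose_spec.2
  refine ⟨fun j => ∑ i ∈ tt.filter (fun i => gg i = j), w i, ?_, ?_, ?_⟩
  · intro j
    exact Finset.sum_nonneg (fun i hi => hw0 i (Finset.mem_filter.1 hi).1)
  · rw [Finset.sum_fiberwise_of_maps_to hgmem, hw1]
  · rw [← hy]
    rw [← Finset.sum_fiberwise_of_maps_to hgmem (fun i => w i • z i)]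
    refine Finset.sum_congr rfl (fun j hj => ?_)
    rw [Finset.sum_smul]
    refine Finset.sum_congr rfl (fun i hi => ?_)
    obtain ⟨hit, hgi⟩ := Finset.mem_filter.1 hi
    rw [← hgi, hgval i hit]

lemma block_norm_le {u z : ℕ → X} (hu : ∀ n, ‖u n‖ ≤ 1) (hz : IsConvexBlock u z)
    (m : ℕ) : ‖z m‖ ≤ 1 := by
  obtain ⟨k, -, -, hmem⟩ := hz
  have h1 : u '' Set.Ico (k m) (k (m + 1)) ⊆ closedBall (0 : X) 1 := by
    rintro - ⟨i, -, rfl⟩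
    simpa [mem_closedBall, dist_eq_norm] using hu i
  have h2 : z m ∈ closedBall (0 : X) 1 :=
    convexHull_min h1 (convex_closedBall _ _) (hmem m)
  simpa [mem_closedBall, dist_eq_norm] using h2

/-- For a sequence with a `(1-ε)` lower ℓ₁-estimate, differences of distinct terms of any
convex block sequence have norm at least `2(1-ε)`. -/
lemma block_diff_ge {u z : ℕ → X} {ε : ℝ}
    (hlow : ∀ (F : Finset ℕ) (t : ℕ → ℝ), (1 - ε) * ∑ j ∈ F, |t j| ≤ ‖∑ j ∈ F, t j • u j‖)
    (hz : IsConvexBlock u z) {a b : ℕ} (hab : a < b) :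
    (1 - ε) * 2 ≤ ‖z a - z b‖ := by
  classical
  obtain ⟨k, -, hkm, hmem⟩ := hz
  obtain ⟨w, hw0, hw1, hwz⟩ := hull_coeffs (hmem a)
  obtain ⟨v, hv0, hv1, hvz⟩ := hull_coeffs (hmem b)
  set Ia := Finset.Ico (k a) (k (a + 1)) with hIa
  set Ib := Finset.Ico (k b) (k (b + 1)) with hIb
  have hIdisj : Disjoint Ia Ib := by
    refine Finset.disjoint_left.2 (fun i hi hi' => ?_)
    rw [hIa, Finset.mem_Ico] at hi
    rw [hIb, Finset.mem_Ico] at hi'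
    have : k (a + 1) ≤ k b := hkm.monotone hab
    omega
  set d : ℕ → ℝ := fun i => (if i ∈ Ia then w i else 0) - (if i ∈ Ib then v i else 0) with hd
  have habs : ∑ i ∈ Ia ∪ Ib, |d i| = 2 := by
    rw [Finset.sum_union hIdisj]
    have h1 : ∀ i ∈ Ia, |d i| = w i := by
      intro i hi
      have hnb : i ∉ Ib := Finset.disjoint_left.1 hIdisj hi
      rw [hd]
      simp only [if_pos hi, if_neg hnb, sub_zero]
      exact abs_of_nonneg (hw0 i)
    have h2 : ∀ i ∈ Ib, |d i| = v i := by
      intro i hi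
      have hna : i ∉ Ia := (Finset.disjoint_right.1 hIdisj) hi
      rw [hd]
      simp only [if_neg hna, if_pos hi, zero_sub, abs_neg]
      exact abs_of_nonneg (hv0 i)
    rw [Finset.sum_congr rfl h1, Finset.sum_congr rfl h2, hw1, hv1]
    norm_num
  have hsum : ∑ i ∈ Ia ∪ Ib, d i • u i = z a - z b := by
    have : ∀ i : ℕ, d i • u i =
        (if i ∈ Ia then w i else 0) • u i - (if i ∈ Ib then v i else 0) • u i := by
      intro i
      rw [hd, sub_smul]
    rw [Finset.sum_congr rfl (fun i _ => this i), Finset.sum_sub_distrib]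
    have ha : ∑ i ∈ Ia ∪ Ib, (if i ∈ Ia then w i else 0) • u i = ∑ i ∈ Ia, w i • u i := by
      rw [← Finset.sum_subset Finset.subset_union_left
        (fun i _ hi => by rw [if_neg hi, zero_smul])]
      exact Finset.sum_congr rfl (fun i hi => by rw [if_pos hi])
    have hb : ∑ i ∈ Ia ∪ Ib, (if i ∈ Ib then v i else 0) • u i = ∑ i ∈ Ib, v i • u i := by
      rw [← Finset.sum_subset Finset.subset_union_right
        (fun i _ hi => by rw [if_neg hi, zero_smul])]
      exact Finset.sum_congr rfl (fun i hi => by rw [if_pos hi])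
    rw [ha, hb, ← hwz, ← hvz]
  calc (1 - ε) * 2 = (1 - ε) * ∑ i ∈ Ia ∪ Ib, |d i| := by rw [habs]
    _ ≤ ‖∑ i ∈ Ia ∪ Ib, d i • u i‖ := hlow _ _
    _ = ‖z a - z b‖ := by rw [hsum]


lemma caSeq_nonneg (z : ℕ → X) : 0 ≤ caSeq z := by
  refine le_ciInf (fun n => Real.sSup_nonneg ?_)
  rintro r ⟨k, -, l, -, rfl⟩
  exact norm_nonneg _

lemma caSeq_set_le_two {z : ℕ → X} (hz : ∀ m, ‖z m‖ ≤ 1) (n : ℕ) :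
    ∀ r ∈ { r : ℝ | ∃ k ≥ n, ∃ l ≥ n, r = ‖z k - z l‖ }, r ≤ 2 := by
  rintro r ⟨k, -, l, -, rfl⟩
  calc ‖z k - z l‖ ≤ ‖z k‖ + ‖z l‖ := norm_sub_le _ _
    _ ≤ 2 := by linarith [hz k, hz l]

lemma caSeq_le_two {z : ℕ → X} (hz : ∀ m, ‖z m‖ ≤ 1) : caSeq z ≤ 2 := by
  refine le_trans (ciInf_le ⟨0, ?_⟩ 0) ?_
  · rintro r ⟨n, rfl⟩
    refine Real.sSup_nonneg ?_
    rintro r ⟨k, -, l, -, rfl⟩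
    exact norm_nonneg _
  · exact Real.sSup_le (caSeq_set_le_two hz 0) (by norm_num)

lemma le_caSeq {z : ℕ → X} {ε : ℝ} (hz : ∀ m, ‖z m‖ ≤ 1)
    (hd : ∀ a b : ℕ, a < b → (1 - ε) * 2 ≤ ‖z a - z b‖) : (1 - ε) * 2 ≤ caSeq z := by
  refine le_ciInf (fun n => ?_)
  refine le_trans (hd n (n + 1) (by omega)) ?_
  exact le_csSup ⟨2, fun r hr => caSeq_set_le_two hz n r hr⟩
    ⟨n, le_rfl, n + 1, by omega, rfl⟩

end Hull

end Stmt15Aux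


theorem stmt15 {X : Type*} [NormedAddCommGroup X] [NormedSpace ℝ X] [CompleteSpace X]
    (h : ∃ T : lp (fun _ : ℕ => ℝ) 1 →L[ℝ] X, ∃ c > (0 : ℝ), ∀ v, c * ‖v‖ ≤ ‖T v‖) :
    RQ X = 2 := by
  classical
  obtain ⟨T, c, hcpos, hc⟩ := h
  have hself : ∀ x : ℕ → X, IsConvexBlock x x := by
    intro x
    refine ⟨id, rfl, strictMono_id, fun n => subset_convexHull ℝ _ ⟨n, ?_, rfl⟩⟩
    simp [Set.mem_Ico]
  have hbddB : ∀ x : ℕ → X, BddBelow { s | ∃ z, IsConvexBlock x z ∧ s = caSeq z } := by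
    intro x
    refine ⟨0, ?_⟩
    rintro s ⟨z, hz, rfl⟩
    exact Stmt15Aux.caSeq_nonneg z
  have hub : ∀ r ∈ { r : ℝ | ∃ x : ℕ → X, (∀ n, x n ∈ closedBall (0 : X) 1) ∧
      r = sInf { s | ∃ z, IsConvexBlock x z ∧ s = caSeq z } }, r ≤ 2 := by
    rintro r ⟨x, hx, rfl⟩
    have hxb : ∀ m, ‖x m‖ ≤ 1 := by
      intro m
      simpa [mem_closedBall, dist_eq_norm] using hx m
    exact le_trans (csInf_le (hbddB x) ⟨x, hself x, rfl⟩) (Stmt15Aux.caSeq_le_two hxb)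
  have upper : RQ X ≤ 2 := Real.sSup_le hub (by norm_num)
  have lower : ∀ ε : ℝ, 0 < ε → (1 - ε) * 2 ≤ RQ X := by
    intro ε hε
    obtain ⟨u, hu1, hlow⟩ := Stmt15Aux.james T c hc hcpos ε hε
    have humem : ∀ n, u n ∈ closedBall (0 : X) 1 := by
      intro n
      simpa [mem_closedBall, dist_eq_norm] using hu1 n
    have h1 : (1 - ε) * 2 ≤ sInf { s | ∃ z, IsConvexBlock u z ∧ s = caSeq z } := by
      refine le_csInf ⟨caSeq u, u, hself u, rfl⟩ ?_
      rintro s ⟨z, hz, rfl⟩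
      refine Stmt15Aux.le_caSeq (Stmt15Aux.block_norm_le hu1 hz) ?_
      intro a b hab
      exact Stmt15Aux.block_diff_ge hlow hz hab
    exact le_trans h1 (le_csSup ⟨2, hub⟩ ⟨u, humem, rfl⟩)
  have h2le : (2 : ℝ) ≤ RQ X := by
    by_contra hlt
    push_neg at hlt
    have hε : 0 < (2 - RQ X) / 4 := by linarith
    have := lower ((2 - RQ X) / 4) hε
    linarith
  linarith
end
end
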